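/- Let n ≥ 2 and 1 ≤ k < n, and let Φ be the conditional sequential-counter AtMostK encoding of y → (x_1 + ⋯ + x_n ≤ k), consisting of: (¬x_1 ∨ s_{1,1}); for 1 < j ≤ k the clause (¬y ∨ ¬s_{1,j}); for 1 < i < n the clauses (¬x_i ∨ s_{i,1}) and (¬s_{i−1,1} ∨ s_{i,1}); for 1 < i < n and 1 < j ≤ k the clauses (¬x_i ∨ ¬s_{i−1,j−1} ∨ s_{i,j}) and (¬s_{i−1,j} ∨ s_{i,j}); and for 1 < i ≤ n the clause (¬y ∨ ¬x_i ∨ ¬s_{i−1,k}). Then assigning y to true and any k distinct variables among x_1, …, x_n to true makes unit propagation derive ¬x_j from the restricted formula for every remaining index j. -/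

import Mathlib

abbrev Lit (V : Type) := V × Bool
abbrev Clause (V : Type) := Finset (Lit V)
abbrev CnfForm (V : Type) := Finset (Clause V)

variable {V : Type} [DecidableEq V]

/-- Restriction Φ|_ρ : remove clauses containing a literal of ρ, and delete from the
remaining clauses every literal whose complement is in ρ. -/
def restrict (Φ : CnfForm V) (ρ : Finset (Lit V)) : CnfForm V :=
  (Φ.filter fun c => ∀ l ∈ ρ, l ∉ c).image fun c => c.filter fun l => (l.1, !l.2) ∉ ρ

/-- Unit propagation derives the literal `l` from `Φ` : repeatedly assigning the
literals of unit clauses true and simplifying eventually produces the unit clause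
`{l}` or the empty clause. -/
inductive UPDerives : CnfForm V → Lit V → Prop
  | unit {Φ : CnfForm V} {l : Lit V} : ({l} : Clause V) ∈ Φ → UPDerives Φ l
  | bot {Φ : CnfForm V} {l : Lit V} : (∅ : Clause V) ∈ Φ → UPDerives Φ l
  | step {Φ : CnfForm V} {l : Lit V} (m : Lit V) : ({m} : Clause V) ∈ Φ →
      UPDerives (restrict Φ {m}) l → UPDerives Φ l

/-- Unit propagation derives the empty clause from `Φ`, i.e. `Φ* = ⊥`. -/
inductive UPEmpty : CnfForm V → Prop
  | bot {Φ : CnfForm V} : (∅ : Clause V) ∈ Φ → UPEmpty Φ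
  | step {Φ : CnfForm V} (m : Lit V) : ({m} : Clause V) ∈ Φ → UPEmpty (restrict Φ {m}) → UPEmpty Φ

/-- `UPReach Φ Ψ` : the formula `Ψ` is obtained from `Φ` by a sequence of
unit-propagation steps. -/
inductive UPReach : CnfForm V → CnfForm V → Prop
  | refl (Φ : CnfForm V) : UPReach Φ Φ
  | step {Φ Ψ : CnfForm V} (m : Lit V) : UPReach Φ Ψ → ({m} : Clause V) ∈ Ψ →
      UPReach Φ (restrict Ψ {m})

/-- The set of variables occurring in `Φ`. -/
def varsOf (Φ : CnfForm V) : Finset V := Φ.biUnion fun c => c.image Prod.fst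

/-- A Horn formula: every clause contains at most one positive literal. -/
def IsHorn (Φ : CnfForm V) : Prop := ∀ c ∈ Φ, (c.filter fun l => l.2 = true).card ≤ 1

/-- `Φ⁻` : the negative clauses of `Φ` (no positive literal). -/
def negClauses (Φ : CnfForm V) : CnfForm V := Φ.filter fun c => ∀ l ∈ c, l.2 = false

/-- `Φ⁺` : the clauses of `Φ` with exactly one positive literal. -/
def posPart (Φ : CnfForm V) : CnfForm V :=
  Φ.filter fun c => (c.filter fun l => l.2 = true).card = 1

/-- The conditional sequential-counter AtMostK encoding of `y → (x_1 + ⋯ + x_n ≤ k)`: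
`(¬x_1 ∨ s_{1,1})`; for `1 < j ≤ k` the clause `(¬y ∨ ¬s_{1,j})`; for `1 < i < n` the
clauses `(¬x_i ∨ s_{i,1})` and `(¬s_{i-1,1} ∨ s_{i,1})`; for `1 < i < n`, `1 < j ≤ k`
the clauses `(¬x_i ∨ ¬s_{i-1,j-1} ∨ s_{i,j})` and `(¬s_{i-1,j} ∨ s_{i,j})`; and for
`1 < i ≤ n` the clause `(¬y ∨ ¬x_i ∨ ¬s_{i-1,k})`. -/
def seqAMKCond (n k : ℕ) (x : ℕ → V) (s : ℕ → ℕ → V) (y : V) : CnfForm V :=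
  insert ({(x 1, false), (s 1 1, true)} : Clause V)
    (((Finset.Ioc 1 k).image fun j => ({(y, false), (s 1 j, false)} : Clause V))
      ∪ ((Finset.Ioo 1 n).biUnion fun i =>
          ({({(x i, false), (s i 1, true)} : Clause V),
            ({(s (i - 1) 1, false), (s i 1, true)} : Clause V)} : CnfForm V))
      ∪ ((Finset.Ioo 1 n ×ˢ Finset.Ioc 1 k).biUnion fun q =>
          ({({(x q.1, false), (s (q.1 - 1) (q.2 - 1), false), (s q.1 q.2, true)} : Clause V),
            ({(s (q.1 - 1) q.2, false), (s q.1 q.2, true)} : Clause V)} : CnfForm V))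
      ∪ ((Finset.Ioc 1 n).image fun i =>
          ({(y, false), (x i, false), (s (i - 1) k, false)} : Clause V)))

/-! ### Auxiliary machinery for unit propagation chains -/

def restrictList (Φ : CnfForm V) : List (Lit V) → CnfForm V
  | [] => Φ
  | m :: P => restrictList (restrict Φ {m}) P

lemma restrictList_append (Φ : CnfForm V) (P Q : List (Lit V)) :
    restrictList Φ (P ++ Q) = restrictList (restrictList Φ P) Q := by
  induction P generalizing Φ with
  | nil => rfl
  | cons m P ih => simp [restrictList, ih]

inductive UnitChain : CnfForm V → List (Lit V) → Prop
  | nil (Φ : CnfForm V) : UnitChain Φ []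
  | cons {Φ : CnfForm V} {m : Lit V} {P : List (Lit V)} :
      ({m} : Clause V) ∈ Φ → UnitChain (restrict Φ {m}) P → UnitChain Φ (m :: P)

lemma UnitChain.append {Φ : CnfForm V} {P Q : List (Lit V)}
    (h1 : UnitChain Φ P) (h2 : UnitChain (restrictList Φ P) Q) : UnitChain Φ (P ++ Q) := by
  induction h1 with
  | nil Φ => exact h2
  | cons hm _ ih => exact UnitChain.cons hm (ih h2)

lemma UnitChain.upDerives {Φ : CnfForm V} {P : List (Lit V)} {l : Lit V}
    (h : UnitChain Φ P) (hl : ({l} : Clause V) ∈ restrictList Φ P) : UPDerives Φ l := by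
  induction h with
  | nil Φ => exact UPDerives.unit hl
  | cons hm _ ih => exact UPDerives.step _ hm (ih hl)

lemma mem_restrict {Φ : CnfForm V} {ρ : Finset (Lit V)} {c₀ : Clause V}
    (hc : c₀ ∈ Φ) (h : ∀ l ∈ ρ, l ∉ c₀) :
    (c₀.filter fun l => (l.1, !l.2) ∉ ρ) ∈ restrict Φ ρ := by
  refine Finset.mem_image.2 ⟨c₀, Finset.mem_filter.2 ⟨hc, h⟩, rfl⟩

lemma mem_restrictList {Φ : CnfForm V} {P : List (Lit V)} {c₀ : Clause V}
    (hc : c₀ ∈ Φ) (h : ∀ m ∈ P, m ∉ c₀) :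
    (c₀.filter fun l => (l.1, !l.2) ∉ P) ∈ restrictList Φ P := by
  induction P generalizing Φ c₀ with
  | nil => simpa [restrictList] using hc
  | cons m P ih =>
      have h1 : (c₀.filter fun l => (l.1, !l.2) ∉ ({m} : Finset (Lit V))) ∈ restrict Φ {m} :=
        mem_restrict hc (by simpa using h m (by simp))
      have h2 := ih h1 (fun m' hm' => fun hmem => h m' (by simp [hm']) (Finset.mem_filter.1 hmem).1)
      rw [Finset.filter_filter] at h2
      have heq : (c₀.filter fun l => ((l.1, !l.2) ∉ ({m} : Finset (Lit V))) ∧ ((l.1, !l.2) ∉ P))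
          = c₀.filter fun l => (l.1, !l.2) ∉ m :: P := by
        apply Finset.filter_congr
        intro l _
        simp [not_or]
      rwa [heq] at h2

lemma unit_mem {Φ : CnfForm V} {ρ : Finset (Lit V)} {P : List (Lit V)} {c₀ : Clause V} {m : Lit V}
    (hc : c₀ ∈ Φ) (hm : m ∈ c₀)
    (hρ : ∀ l ∈ ρ, l ∉ c₀) (hP : ∀ l ∈ P, l ∉ c₀)
    (hmρ : (m.1, !m.2) ∉ ρ) (hmP : (m.1, !m.2) ∉ P)
    (hrest : ∀ l ∈ c₀, l ≠ m → (l.1, !l.2) ∈ ρ ∨ (l.1, !l.2) ∈ P) :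
    ({m} : Clause V) ∈ restrictList (restrict Φ ρ) P := by
  have h1 := mem_restrict hc hρ
  have h2 := mem_restrictList h1
    (fun m' hm' hmem => hP m' hm' (Finset.mem_of_mem_filter _ hmem))
  rw [Finset.filter_filter] at h2
  have : (c₀.filter fun l => ((l.1, !l.2) ∉ ρ) ∧ ((l.1, !l.2) ∉ P)) = {m} := by
    ext l
    simp only [Finset.mem_filter, Finset.mem_singleton]
    constructor
    · rintro ⟨hl, h₁, h₂⟩
      by_contra hne
      rcases hrest l hl hne with h | h
      · exact h₁ h
      · exact h₂ h
    · rintro rfl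
      exact ⟨hm, hmρ, hmP⟩
  rwa [this] at h2

/-! ### Context bundling all the data and hypotheses -/

structure SCtx (V : Type) [DecidableEq V] where
  n : ℕ
  k : ℕ
  x : ℕ → V
  s : ℕ → ℕ → V
  y : V
  T : Finset ℕ
  t : ℕ → ℕ
  hn : 2 ≤ n
  hk : 1 ≤ k
  hkn : k < n
  hx : ∀ i, 1 ≤ i → i ≤ n → ∀ j, 1 ≤ j → j ≤ n → x i = x j → i = j
  hsinj : ∀ i, 1 ≤ i → i ≤ n - 1 → ∀ j, 1 ≤ j → j ≤ k →
    ∀ i', 1 ≤ i' → i' ≤ n - 1 → ∀ j', 1 ≤ j' → j' ≤ k → s i j = s i' j' → i = i' ∧ j = j'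
  hxs : ∀ l, 1 ≤ l → l ≤ n → ∀ i, 1 ≤ i → i ≤ n - 1 → ∀ j, 1 ≤ j → j ≤ k → x l ≠ s i j
  hxy : ∀ i, 1 ≤ i → i ≤ n → x i ≠ y
  hsy : ∀ i, 1 ≤ i → i ≤ n - 1 → ∀ j, 1 ≤ j → j ≤ k → s i j ≠ y
  hT : T ⊆ Finset.Icc 1 n
  ht_mem : ∀ ℓ, 1 ≤ ℓ → ℓ ≤ k → t ℓ ∈ T
  ht_mono : ∀ ℓ ℓ', 1 ≤ ℓ → ℓ < ℓ' → ℓ' ≤ k → t ℓ < t ℓ'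

namespace SCtx

variable {V : Type} [DecidableEq V] (C : SCtx V)

def Phi : CnfForm V := seqAMKCond C.n C.k C.x C.s C.y

def rho : Finset (Lit V) := insert ((C.y, true) : Lit V) (C.T.image fun i => ((C.x i, true) : Lit V))

lemma t_ge_one {ℓ : ℕ} (h1 : 1 ≤ ℓ) (h2 : ℓ ≤ C.k) : 1 ≤ C.t ℓ := by
  have := C.hT (C.ht_mem ℓ h1 h2)
  rw [Finset.mem_Icc] at this; exact this.1

lemma t_le_n {ℓ : ℕ} (h1 : 1 ≤ ℓ) (h2 : ℓ ≤ C.k) : C.t ℓ ≤ C.n := by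
  have := C.hT (C.ht_mem ℓ h1 h2)
  rw [Finset.mem_Icc] at this; exact this.2

lemma t_lt_n {ℓ : ℕ} (h1 : 1 ≤ ℓ) (h2 : ℓ < C.k) : C.t ℓ < C.n :=
  lt_of_lt_of_le (C.ht_mono ℓ C.k h1 h2 le_rfl) (C.t_le_n C.hk le_rfl)

lemma t_ge_two {ℓ : ℕ} (h1 : 2 ≤ ℓ) (h2 : ℓ ≤ C.k) : 2 ≤ C.t ℓ := by
  have h := C.ht_mono 1 ℓ le_rfl h1 h2
  have := C.t_ge_one le_rfl (le_trans (by omega) h2)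
  omega

/-! ### Membership of the clauses in the formula -/

lemma cA1_mem {i : ℕ} (h1 : 1 ≤ i) (h2 : i < C.n) :
    ({(C.x i, false), (C.s i 1, true)} : Clause V) ∈ C.Phi := by
  rcases eq_or_lt_of_le h1 with h | h
  · subst h; simp [Phi, seqAMKCond]
  · unfold Phi seqAMKCond
    refine Finset.mem_insert_of_mem ?_
    refine Finset.mem_union_left _ (Finset.mem_union_left _ (Finset.mem_union_right _ ?_))
    exact Finset.mem_biUnion.2 ⟨i, by simp [Finset.mem_Ioo, h, h2], by simp⟩

lemma cB_mem {i : ℕ} (h1 : 1 < i) (h2 : i < C.n) :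
    ({(C.s (i - 1) 1, false), (C.s i 1, true)} : Clause V) ∈ C.Phi := by
  unfold Phi seqAMKCond
  refine Finset.mem_insert_of_mem ?_
  refine Finset.mem_union_left _ (Finset.mem_union_left _ (Finset.mem_union_right _ ?_))
  exact Finset.mem_biUnion.2 ⟨i, by simp [Finset.mem_Ioo, h1, h2], by simp⟩

lemma cC_mem {i j : ℕ} (h1 : 1 < i) (h2 : i < C.n) (h3 : 1 < j) (h4 : j ≤ C.k) :
    ({(C.x i, false), (C.s (i - 1) (j - 1), false), (C.s i j, true)} : Clause V) ∈ C.Phi := by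
  unfold Phi seqAMKCond
  refine Finset.mem_insert_of_mem ?_
  refine Finset.mem_union_left _ (Finset.mem_union_right _ ?_)
  exact Finset.mem_biUnion.2 ⟨(i, j),
    Finset.mem_product.2 ⟨by simp [Finset.mem_Ioo, h1, h2], by simp [Finset.mem_Ioc, h3, h4]⟩,
    by simp⟩

lemma cD_mem {i j : ℕ} (h1 : 1 < i) (h2 : i < C.n) (h3 : 1 < j) (h4 : j ≤ C.k) :
    ({(C.s (i - 1) j, false), (C.s i j, true)} : Clause V) ∈ C.Phi := by
  unfold Phi seqAMKCond
  refine Finset.mem_insert_of_mem ?_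
  refine Finset.mem_union_left _ (Finset.mem_union_right _ ?_)
  exact Finset.mem_biUnion.2 ⟨(i, j),
    Finset.mem_product.2 ⟨by simp [Finset.mem_Ioo, h1, h2], by simp [Finset.mem_Ioc, h3, h4]⟩,
    by simp⟩

lemma cBD_mem {i ℓ : ℕ} (h1 : 1 < i) (h2 : i < C.n) (h3 : 1 ≤ ℓ) (h4 : ℓ ≤ C.k) :
    ({(C.s (i - 1) ℓ, false), (C.s i ℓ, true)} : Clause V) ∈ C.Phi := by
  rcases eq_or_lt_of_le h3 with h | h
  · subst h; exact C.cB_mem h1 h2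
  · exact C.cD_mem h1 h2 h h4

lemma cE_mem {i : ℕ} (h1 : 1 < i) (h2 : i ≤ C.n) :
    ({(C.y, false), (C.x i, false), (C.s (i - 1) C.k, false)} : Clause V) ∈ C.Phi := by
  unfold Phi seqAMKCond
  refine Finset.mem_insert_of_mem ?_
  refine Finset.mem_union_right _ ?_
  exact Finset.mem_image.2 ⟨i, by simp [Finset.mem_Ioc, h1, h2], rfl⟩

/-! ### Facts about the restriction set ρ -/

lemma mem_rho_pol {l : Lit V} (h : l ∈ C.rho) :
    l.2 = true ∧ (l.1 = C.y ∨ ∃ i, 1 ≤ i ∧ i ≤ C.n ∧ l.1 = C.x i) := by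
  unfold rho at h
  rcases Finset.mem_insert.1 h with h | h
  · subst h; exact ⟨rfl, Or.inl rfl⟩
  · obtain ⟨i, hi, rfl⟩ := Finset.mem_image.1 h
    have := C.hT hi; rw [Finset.mem_Icc] at this
    exact ⟨rfl, Or.inr ⟨i, this.1, this.2, rfl⟩⟩

lemma neg_notin_rho (v : V) : ((v, false) : Lit V) ∉ C.rho := by
  intro h
  exact absurd (C.mem_rho_pol h).1 (by simp)

lemma s_notin_rho {i ℓ : ℕ} (b : Bool) (h1 : 1 ≤ i) (h2 : i ≤ C.n - 1)
    (h3 : 1 ≤ ℓ) (h4 : ℓ ≤ C.k) : ((C.s i ℓ, b) : Lit V) ∉ C.rho := by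
  intro h
  rcases (C.mem_rho_pol h).2 with h' | ⟨i', hi1, hi2, h'⟩
  · exact C.hsy i h1 h2 ℓ h3 h4 h'
  · exact C.hxs i' hi1 hi2 i h1 h2 ℓ h3 h4 h'.symm

lemma x_true_mem_rho {i : ℕ} (h : i ∈ C.T) : ((C.x i, true) : Lit V) ∈ C.rho := by
  unfold rho
  exact Finset.mem_insert_of_mem (Finset.mem_image.2 ⟨i, h, rfl⟩)

lemma y_true_mem_rho : ((C.y, true) : Lit V) ∈ C.rho := Finset.mem_insert_self _ _

lemma x_true_notin_rho {j : ℕ} (h1 : 1 ≤ j) (h2 : j ≤ C.n) (hjT : j ∉ C.T) :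
    ((C.x j, true) : Lit V) ∉ C.rho := by
  intro h
  rcases (C.mem_rho_pol h).2 with h' | ⟨i', hi1, hi2, h'⟩
  · exact C.hxy j h1 h2 h'
  · -- need the actual witness i' ∈ T
    unfold rho at h
    rcases Finset.mem_insert.1 h with h'' | h''
    · exact C.hxy j h1 h2 (by injection h'')
    · obtain ⟨i, hiT, heq⟩ := Finset.mem_image.1 h''
      have hrange := C.hT hiT; rw [Finset.mem_Icc] at hrange
      have : C.x i = C.x j := by injection heq
      have := C.hx i hrange.1 hrange.2 j h1 h2 this
      exact hjT (this ▸ hiT)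

/-- Helper : ρ avoids any clause whose literals are negative or have an s-variable. -/
lemma rho_avoid {c₀ : Clause V}
    (h : ∀ l ∈ c₀, l.2 = false ∨ ∃ i ℓ, 1 ≤ i ∧ i ≤ C.n - 1 ∧ 1 ≤ ℓ ∧ ℓ ≤ C.k ∧ l.1 = C.s i ℓ) :
    ∀ l ∈ C.rho, l ∉ c₀ := by
  intro l hl hlc
  obtain ⟨hpol, hvar⟩ := C.mem_rho_pol hl
  rcases h l hlc with h' | ⟨i, ℓ, hi1, hi2, hl1, hl2, h'⟩
  · rw [hpol] at h'; exact absurd h' (by simp)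
  · rcases hvar with hv | ⟨i', hi'1, hi'2, hv⟩
    · exact C.hsy i hi1 hi2 ℓ hl1 hl2 (h'.symm.trans hv)
    · exact C.hxs i' hi'1 hi'2 i hi1 hi2 ℓ hl1 hl2 (hv.symm.trans h')

/-! ### Descriptions of derived literals -/

def Desc (f g : ℕ → ℕ → Prop) (l : Lit V) : Prop :=
  ∃ i ℓ, 1 ≤ i ∧ i ≤ C.n - 1 ∧ 1 ≤ ℓ ∧ ℓ ≤ C.k ∧
    ((l = (C.s i ℓ, true) ∧ C.t ℓ ≤ i ∧ f ℓ i) ∨ (l = (C.s i ℓ, false) ∧ i < C.t ℓ ∧ g ℓ i))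

lemma not_mem_pos {P : List (Lit V)} {f g : ℕ → ℕ → Prop}
    (hdesc : ∀ l ∈ P, C.Desc f g l) {i ℓ : ℕ}
    (h1 : 1 ≤ i) (h2 : i ≤ C.n - 1) (h3 : 1 ≤ ℓ) (h4 : ℓ ≤ C.k)
    (h : ¬ (C.t ℓ ≤ i ∧ f ℓ i)) : ((C.s i ℓ, true) : Lit V) ∉ P := by
  intro hmem
  obtain ⟨i', ℓ', hi1, hi2, hl1, hl2, hor⟩ := hdesc _ hmem
  rcases hor with ⟨heq, hti, hf⟩ | ⟨heq, _, _⟩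
  · have hvar : C.s i ℓ = C.s i' ℓ' := congrArg Prod.fst heq
    obtain ⟨hii, hll⟩ := C.hsinj i h1 h2 ℓ h3 h4 i' hi1 hi2 ℓ' hl1 hl2 hvar
    subst hii; subst hll
    exact h ⟨hti, hf⟩
  · exact absurd (congrArg Prod.snd heq) (by simp)

lemma not_mem_neg {P : List (Lit V)} {f g : ℕ → ℕ → Prop}
    (hdesc : ∀ l ∈ P, C.Desc f g l) {i ℓ : ℕ}
    (h1 : 1 ≤ i) (h2 : i ≤ C.n - 1) (h3 : 1 ≤ ℓ) (h4 : ℓ ≤ C.k)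
    (h : ¬ (i < C.t ℓ ∧ g ℓ i)) : ((C.s i ℓ, false) : Lit V) ∉ P := by
  intro hmem
  obtain ⟨i', ℓ', hi1, hi2, hl1, hl2, hor⟩ := hdesc _ hmem
  rcases hor with ⟨heq, _, _⟩ | ⟨heq, hti, hg⟩
  · exact absurd (congrArg Prod.snd heq) (by simp)
  · have hvar : C.s i ℓ = C.s i' ℓ' := congrArg Prod.fst heq
    obtain ⟨hii, hll⟩ := C.hsinj i h1 h2 ℓ h3 h4 i' hi1 hi2 ℓ' hl1 hl2 hvar
    subst hii; subst hll
    exact h ⟨hti, hg⟩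

lemma not_mem_xlit {P : List (Lit V)} {f g : ℕ → ℕ → Prop}
    (hdesc : ∀ l ∈ P, C.Desc f g l) {j : ℕ}
    (h1 : 1 ≤ j) (h2 : j ≤ C.n) (b : Bool) : ((C.x j, b) : Lit V) ∉ P := by
  intro hmem
  obtain ⟨i', ℓ', hi1, hi2, hl1, hl2, hor⟩ := hdesc _ hmem
  rcases hor with ⟨heq, _, _⟩ | ⟨heq, _, _⟩ <;>
    exact C.hxs j h1 h2 i' hi1 hi2 ℓ' hl1 hl2 (congrArg Prod.fst heq)

lemma not_mem_ylit {P : List (Lit V)} {f g : ℕ → ℕ → Prop}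
    (hdesc : ∀ l ∈ P, C.Desc f g l) (b : Bool) : ((C.y, b) : Lit V) ∉ P := by
  intro hmem
  obtain ⟨i', ℓ', hi1, hi2, hl1, hl2, hor⟩ := hdesc _ hmem
  rcases hor with ⟨heq, _, _⟩ | ⟨heq, _, _⟩ <;>
    exact C.hsy i' hi1 hi2 ℓ' hl1 hl2 (congrArg Prod.fst heq).symm

end SCtx

/-! ### Segments of the propagation chain -/

lemma mem_range'_iff {m a d : ℕ} : m ∈ List.range' a d ↔ a ≤ m ∧ m < a + d := by
  rw [List.mem_range']
  constructor
  · rintro ⟨i, hi, rfl⟩; omega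
  · intro h; exact ⟨m - a, by omega, by omega⟩

def posSeg (s : ℕ → ℕ → V) (ℓ a d : ℕ) : List (Lit V) :=
  (List.range' a d).map fun i => (s i ℓ, true)

def negSegD (s : ℕ → ℕ → V) (ℓ d : ℕ) : List (Lit V) :=
  ((List.range' 1 d).reverse).map fun i => (s i ℓ, false)

lemma posSeg_succ (s : ℕ → ℕ → V) (ℓ a d : ℕ) :
    posSeg s ℓ a (d + 1) = (s a ℓ, true) :: posSeg s ℓ (a + 1) d := by
  simp [posSeg, List.range'_succ]

lemma negSegD_succ (s : ℕ → ℕ → V) (ℓ d : ℕ) :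
    negSegD s ℓ (d + 1) = (s (d + 1) ℓ, false) :: negSegD s ℓ d := by
  simp [negSegD, List.range'_1_concat, Nat.add_comm]

lemma mem_posSeg {s : ℕ → ℕ → V} {ℓ a d : ℕ} {l : Lit V} :
    l ∈ posSeg s ℓ a d ↔ ∃ i, a ≤ i ∧ i < a + d ∧ l = (s i ℓ, true) := by
  simp only [posSeg, List.mem_map, mem_range'_iff]
  constructor
  · rintro ⟨i, hi, rfl⟩; exact ⟨i, hi.1, hi.2, rfl⟩
  · rintro ⟨i, h1, h2, rfl⟩; exact ⟨i, ⟨h1, h2⟩, rfl⟩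

lemma mem_negSegD {s : ℕ → ℕ → V} {ℓ d : ℕ} {l : Lit V} :
    l ∈ negSegD s ℓ d ↔ ∃ i, 1 ≤ i ∧ i ≤ d ∧ l = (s i ℓ, false) := by
  simp only [negSegD, List.mem_map, List.mem_reverse, mem_range'_iff]
  constructor
  · rintro ⟨i, hi, rfl⟩; exact ⟨i, hi.1, by omega, rfl⟩
  · rintro ⟨i, h1, h2, rfl⟩; exact ⟨i, ⟨h1, by omega⟩, rfl⟩

lemma restrict_restrictList (Φ : CnfForm V) (P : List (Lit V)) (m : Lit V) :
    restrict (restrictList Φ P) {m} = restrictList Φ (P ++ [m]) := by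
  rw [restrictList_append]; rfl

namespace SCtx

variable {V : Type} [DecidableEq V] (C : SCtx V)

/-! ### The forward (positive) propagation chain -/

lemma posSegChain (ℓ : ℕ) (h3 : 1 ≤ ℓ) (h4 : ℓ ≤ C.k) (d : ℕ) :
    ∀ (a : ℕ) (P : List (Lit V)), C.t ℓ < a → a + d ≤ C.n →
    (∀ l ∈ P, C.Desc (fun ℓ' i => ℓ' < ℓ ∨ (ℓ' = ℓ ∧ i < a)) (fun _ _ => False) l) →
    ((C.s (a - 1) ℓ, true) : Lit V) ∈ P →
    UnitChain (restrictList (restrict C.Phi C.rho) P) (posSeg C.s ℓ a d) := by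
  induction d with
  | zero => intro a P _ _ _ _; exact UnitChain.nil _
  | succ d ih =>
    intro a P ha had hdesc hprev
    have ht1 := C.t_ge_one h3 h4
    rw [posSeg_succ]
    refine UnitChain.cons ?_ ?_
    · refine unit_mem (c₀ := {((C.s (a - 1) ℓ, false) : Lit V), (C.s a ℓ, true)})
        (C.cBD_mem (by omega) (by omega) h3 h4) (by simp) ?_ ?_ ?_ ?_ ?_
      · apply C.rho_avoid
        intro l hl
        rcases Finset.mem_insert.1 hl with rfl | hl
        · exact Or.inl rfl
        · rw [Finset.mem_singleton] at hl; subst hl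
          exact Or.inr ⟨a, ℓ, by omega, by omega, h3, h4, rfl⟩
      · intro l hlP hlc
        rcases Finset.mem_insert.1 hlc with rfl | hlc
        · exact C.not_mem_neg hdesc (by omega) (by omega) h3 h4 (by simp) hlP
        · rw [Finset.mem_singleton] at hlc; subst hlc
          exact C.not_mem_pos hdesc (by omega) (by omega) h3 h4 (by omega) hlP
      · exact C.s_notin_rho false (by omega) (by omega) h3 h4
      · exact C.not_mem_neg hdesc (by omega) (by omega) h3 h4 (by simp)
      · intro l hlc hlm
        rcases Finset.mem_insert.1 hlc with rfl | hlc
        · exact Or.inr hprev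
        · rw [Finset.mem_singleton] at hlc; subst hlc; exact absurd rfl hlm
    · rw [restrict_restrictList]
      apply ih (a + 1) (P ++ [(C.s a ℓ, true)]) (by omega) (by omega)
      · intro l hl
        rcases List.mem_append.1 hl with hl | hl
        · obtain ⟨i', ℓ', hi1, hi2, hl1, hl2, hor⟩ := hdesc l hl
          refine ⟨i', ℓ', hi1, hi2, hl1, hl2, ?_⟩
          rcases hor with ⟨heq, hti, hf⟩ | ⟨_, _, hfalse⟩
          · refine Or.inl ⟨heq, hti, ?_⟩
            rcases hf with h | h
            · exact Or.inl h
            · exact Or.inr ⟨h.1, by omega⟩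
          · exact hfalse.elim
        · rw [List.mem_singleton] at hl; subst hl
          exact ⟨a, ℓ, by omega, by omega, h3, h4, Or.inl ⟨rfl, by omega, Or.inr ⟨rfl, by omega⟩⟩⟩
      · have : a + 1 - 1 = a := by omega
        rw [this]
        exact List.mem_append_right _ (by simp)

/-! ### The backward (negative) propagation chain -/

lemma negSegChain (ℓ : ℕ) (h3 : 1 ≤ ℓ) (h4 : ℓ ≤ C.k) (d : ℕ) :
    ∀ (P : List (Lit V)), d + 2 ≤ C.t ℓ →
    (∀ l ∈ P, C.Desc (fun _ _ => True) (fun ℓ' i => ℓ < ℓ' ∨ (ℓ' = ℓ ∧ d < i)) l) →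
    ((C.s (d + 1) ℓ, false) : Lit V) ∈ P →
    UnitChain (restrictList (restrict C.Phi C.rho) P) (negSegD C.s ℓ d) := by
  induction d with
  | zero => intro P _ _ _; exact UnitChain.nil _
  | succ d ih =>
    intro P hd hdesc hprev
    have htn := C.t_le_n h3 h4
    rw [negSegD_succ]
    refine UnitChain.cons ?_ ?_
    · refine unit_mem (c₀ := {((C.s (d + 1) ℓ, false) : Lit V), (C.s (d + 2) ℓ, true)})
        (C.cBD_mem (i := d + 2) (by omega) (by omega) h3 h4) (by simp) ?_ ?_ ?_ ?_ ?_
      · apply C.rho_avoid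
        intro l hl
        rcases Finset.mem_insert.1 hl with rfl | hl
        · exact Or.inl rfl
        · rw [Finset.mem_singleton] at hl; subst hl
          exact Or.inr ⟨d + 2, ℓ, by omega, by omega, h3, h4, rfl⟩
      · intro l hlP hlc
        rcases Finset.mem_insert.1 hlc with rfl | hlc
        · exact C.not_mem_neg hdesc (by omega) (by omega) h3 h4 (by omega) hlP
        · rw [Finset.mem_singleton] at hlc; subst hlc
          exact C.not_mem_pos hdesc (by omega) (by omega) h3 h4 (by omega) hlP
      · exact C.s_notin_rho true (by omega) (by omega) h3 h4
      · exact C.not_mem_pos hdesc (by omega) (by omega) h3 h4 (by omega)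
      · intro l hlc hlm
        rcases Finset.mem_insert.1 hlc with rfl | hlc
        · exact absurd rfl hlm
        · rw [Finset.mem_singleton] at hlc; subst hlc
          exact Or.inr hprev
    · rw [restrict_restrictList]
      apply ih (P ++ [(C.s (d + 1) ℓ, false)]) (by omega)
      · intro l hl
        rcases List.mem_append.1 hl with hl | hl
        · obtain ⟨i', ℓ', hi1, hi2, hl1, hl2, hor⟩ := hdesc l hl
          refine ⟨i', ℓ', hi1, hi2, hl1, hl2, ?_⟩
          rcases hor with ⟨heq, hti, _⟩ | ⟨heq, hti, hg⟩
          · exact Or.inl ⟨heq, hti, trivial⟩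
          · refine Or.inr ⟨heq, hti, ?_⟩
            rcases hg with h | h
            · exact Or.inl h
            · exact Or.inr ⟨h.1, by omega⟩
        · rw [List.mem_singleton] at hl; subst hl
          exact ⟨d + 1, ℓ, by omega, by omega, h3, h4,
            Or.inr ⟨rfl, by omega, Or.inr ⟨rfl, by omega⟩⟩⟩
      · exact List.mem_append_right _ (by simp)

/-! ### Phase A : derive all positive s-literals level by level -/

lemma phaseA (r : ℕ) : ∀ (ℓ : ℕ) (P : List (Lit V)), 1 ≤ ℓ → ℓ + r = C.k + 1 →
    (∀ l ∈ P, C.Desc (fun ℓ' _ => ℓ' < ℓ) (fun _ _ => False) l) →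
    (∀ ℓ' i, 1 ≤ ℓ' → ℓ' < ℓ → C.t ℓ' ≤ i → i ≤ C.n - 1 → ((C.s i ℓ', true) : Lit V) ∈ P) →
    UnitChain (restrictList (restrict C.Phi C.rho) P)
      ((List.range' ℓ r).flatMap fun ℓ' => posSeg C.s ℓ' (C.t ℓ') (C.n - C.t ℓ')) := by
  induction r with
  | zero => intro ℓ P _ _ _ _; exact UnitChain.nil _
  | succ r ih =>
    intro ℓ P hℓ1 hℓr hdesc hlow
    have hℓk : ℓ ≤ C.k := by omega
    have htn := C.t_le_n hℓ1 hℓk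
    have ht1 := C.t_ge_one hℓ1 hℓk
    rw [List.range'_succ, List.flatMap_cons]
    by_cases htlt : C.t ℓ < C.n
    case neg =>
      have hteq : C.t ℓ = C.n := by omega
      have hempty : posSeg C.s ℓ (C.t ℓ) (C.n - C.t ℓ) = [] := by
        rw [hteq]; simp [posSeg]
      rw [hempty, List.nil_append]
      apply ih (ℓ + 1) P (by omega) (by omega)
      · intro l hl
        obtain ⟨i', ℓ', a, b, c, d, hor⟩ := hdesc l hl
        refine ⟨i', ℓ', a, b, c, d, ?_⟩
        rcases hor with ⟨h1, h2, h3⟩ | ⟨_, _, hfalse⟩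
        · exact Or.inl ⟨h1, h2, by omega⟩
        · exact hfalse.elim
      · intro ℓ' i hℓ'1 hℓ' hti hin
        rcases Nat.lt_or_ge ℓ' ℓ with h | h
        · exact hlow ℓ' i hℓ'1 h hti hin
        · have heq : ℓ' = ℓ := by omega
          subst heq
          exact absurd hti (by omega)
    case pos =>
      have hseg : posSeg C.s ℓ (C.t ℓ) (C.n - C.t ℓ)
          = ((C.s (C.t ℓ) ℓ, true) : Lit V) :: posSeg C.s ℓ (C.t ℓ + 1) (C.n - C.t ℓ - 1) := by
        have h : C.n - C.t ℓ = (C.n - C.t ℓ - 1) + 1 := by omega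
        rw [h, posSeg_succ, Nat.add_sub_cancel]
      rw [hseg, List.cons_append]
      have hm0 : ({((C.s (C.t ℓ) ℓ, true) : Lit V)} : Clause V)
          ∈ restrictList (restrict C.Phi C.rho) P := by
        rcases Nat.lt_or_ge ℓ 2 with hcase | hcase
        · have hℓeq : ℓ = 1 := by omega
          subst hℓeq
          refine unit_mem (c₀ := {((C.x (C.t 1), false) : Lit V), (C.s (C.t 1) 1, true)})
            (C.cA1_mem ht1 htlt) (by simp) ?_ ?_ ?_ ?_ ?_
          · apply C.rho_avoid
            intro l hl
            rcases Finset.mem_insert.1 hl with rfl | hl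
            · exact Or.inl rfl
            · rw [Finset.mem_singleton] at hl; subst hl
              exact Or.inr ⟨C.t 1, 1, ht1, by omega, le_rfl, C.hk, rfl⟩
          · intro l hlP hlc
            rcases Finset.mem_insert.1 hlc with rfl | hlc
            · exact C.not_mem_xlit hdesc ht1 htn false hlP
            · rw [Finset.mem_singleton] at hlc; subst hlc
              exact C.not_mem_pos hdesc ht1 (by omega) le_rfl C.hk (by omega) hlP
          · exact C.s_notin_rho false ht1 (by omega) le_rfl C.hk
          · exact C.not_mem_neg hdesc ht1 (by omega) le_rfl C.hk (by simp)
          · intro l hlc hlm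
            rcases Finset.mem_insert.1 hlc with rfl | hlc
            · exact Or.inl (C.x_true_mem_rho (C.ht_mem 1 le_rfl C.hk))
            · rw [Finset.mem_singleton] at hlc; subst hlc; exact absurd rfl hlm
        · have ht2 : 2 ≤ C.t ℓ := C.t_ge_two hcase hℓk
          have htm : C.t (ℓ - 1) ≤ C.t ℓ - 1 := by
            have := C.ht_mono (ℓ - 1) ℓ (by omega) (by omega) hℓk; omega
          have htm1 : 1 ≤ C.t (ℓ - 1) := C.t_ge_one (by omega) (by omega)
          refine unit_mem (c₀ := {((C.x (C.t ℓ), false) : Lit V),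
              (C.s (C.t ℓ - 1) (ℓ - 1), false), (C.s (C.t ℓ) ℓ, true)})
            (C.cC_mem (by omega) htlt (by omega) hℓk) (by simp) ?_ ?_ ?_ ?_ ?_
          · apply C.rho_avoid
            intro l hl
            rcases Finset.mem_insert.1 hl with rfl | hl
            · exact Or.inl rfl
            · rcases Finset.mem_insert.1 hl with rfl | hl
              · exact Or.inr ⟨C.t ℓ - 1, ℓ - 1, by omega, by omega, by omega, by omega, rfl⟩
              · rw [Finset.mem_singleton] at hl; subst hl
                exact Or.inr ⟨C.t ℓ, ℓ, ht1, by omega, hℓ1, hℓk, rfl⟩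
          · intro l hlP hlc
            rcases Finset.mem_insert.1 hlc with rfl | hlc
            · exact C.not_mem_xlit hdesc ht1 htn false hlP
            · rcases Finset.mem_insert.1 hlc with rfl | hlc
              · exact C.not_mem_neg hdesc (by omega) (by omega) (by omega) (by omega)
                  (by simp) hlP
              · rw [Finset.mem_singleton] at hlc; subst hlc
                exact C.not_mem_pos hdesc ht1 (by omega) hℓ1 hℓk (by omega) hlP
          · exact C.s_notin_rho false ht1 (by omega) hℓ1 hℓk
          · exact C.not_mem_neg hdesc ht1 (by omega) hℓ1 hℓk (by simp)
          · intro l hlc hlm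
            rcases Finset.mem_insert.1 hlc with rfl | hlc
            · exact Or.inl (C.x_true_mem_rho (C.ht_mem ℓ hℓ1 hℓk))
            · rcases Finset.mem_insert.1 hlc with rfl | hlc
              · exact Or.inr (hlow (ℓ - 1) (C.t ℓ - 1) (by omega) (by omega) htm (by omega))
              · rw [Finset.mem_singleton] at hlc; subst hlc; exact absurd rfl hlm
      refine UnitChain.cons hm0 ?_
      rw [restrict_restrictList]
      set m0 : Lit V := (C.s (C.t ℓ) ℓ, true) with hm0def
      have hdesc1 : ∀ l ∈ P ++ [m0],
          C.Desc (fun ℓ' i => ℓ' < ℓ ∨ (ℓ' = ℓ ∧ i < C.t ℓ + 1)) (fun _ _ => False) l := by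
        intro l hl
        rcases List.mem_append.1 hl with hl | hl
        · obtain ⟨i', ℓ', a, b, c, d, hor⟩ := hdesc l hl
          refine ⟨i', ℓ', a, b, c, d, ?_⟩
          rcases hor with ⟨h1, h2, h3⟩ | ⟨_, _, hfalse⟩
          · exact Or.inl ⟨h1, h2, Or.inl h3⟩
          · exact hfalse.elim
        · rw [List.mem_singleton] at hl; subst hl
          exact ⟨C.t ℓ, ℓ, ht1, by omega, hℓ1, hℓk,
            Or.inl ⟨rfl, le_rfl, Or.inr ⟨rfl, by omega⟩⟩⟩
      apply UnitChain.append
      · apply C.posSegChain ℓ hℓ1 hℓk (C.n - C.t ℓ - 1) (C.t ℓ + 1) (P ++ [m0])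
          (by omega) (by omega) hdesc1
        have h : C.t ℓ + 1 - 1 = C.t ℓ := by omega
        rw [h]
        exact List.mem_append_right _ (by simp [hm0def])
      · rw [← restrictList_append]
        apply ih (ℓ + 1) ((P ++ [m0]) ++ posSeg C.s ℓ (C.t ℓ + 1) (C.n - C.t ℓ - 1))
          (by omega) (by omega)
        · intro l hl
          rcases List.mem_append.1 hl with hl | hl
          · obtain ⟨i', ℓ', a, b, c, d, hor⟩ := hdesc1 l hl
            refine ⟨i', ℓ', a, b, c, d, ?_⟩
            rcases hor with ⟨h1, h2, _⟩ | ⟨_, _, hfalse⟩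
            · refine Or.inl ⟨h1, h2, ?_⟩
              rcases ‹ℓ' < ℓ ∨ (ℓ' = ℓ ∧ _)› with h | h
              · omega
              · omega
            · exact hfalse.elim
          · obtain ⟨i, hi1, hi2, rfl⟩ := mem_posSeg.1 hl
            exact ⟨i, ℓ, by omega, by omega, hℓ1, hℓk, Or.inl ⟨rfl, by omega, by omega⟩⟩
        · intro ℓ' i hℓ'1 hℓ' hti hin
          rcases Nat.lt_or_ge ℓ' ℓ with h | h
          · exact List.mem_append_left _
              (List.mem_append_left _ (hlow ℓ' i hℓ'1 h hti hin))
          · have heq : ℓ' = ℓ := by omega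
            subst heq
            rcases Nat.eq_or_lt_of_le hti with h' | h'
            · apply List.mem_append_left
              apply List.mem_append_right
              simp [hm0def, ← h']
            · exact List.mem_append_right _
                (mem_posSeg.2 ⟨i, by omega, by omega, rfl⟩)

/-! ### Phase B : derive all negative s-literals level by level, top down -/

lemma phaseB : ∀ (ℓ : ℕ) (P : List (Lit V)), ℓ ≤ C.k →
    (∀ l ∈ P, C.Desc (fun _ _ => True) (fun ℓ' _ => ℓ < ℓ') l) →
    (∀ ℓ' i, ℓ < ℓ' → ℓ' ≤ C.k → 1 ≤ i → i < C.t ℓ' → ((C.s i ℓ', false) : Lit V) ∈ P) →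
    UnitChain (restrictList (restrict C.Phi C.rho) P)
      (((List.range' 1 ℓ).reverse).flatMap fun ℓ' => negSegD C.s ℓ' (C.t ℓ' - 1)) := by
  intro ℓ
  induction ℓ with
  | zero => intro P _ _ _; exact UnitChain.nil _
  | succ ℓ ih =>
    intro P hℓk hdesc hlow
    have h1ℓ : 1 ≤ ℓ + 1 := by omega
    have htn := C.t_le_n h1ℓ hℓk
    have ht1 := C.t_ge_one h1ℓ hℓk
    have hrev : (List.range' 1 (ℓ + 1)).reverse = (ℓ + 1) :: (List.range' 1 ℓ).reverse := by
      rw [List.range'_1_concat]; simp [Nat.add_comm]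
    rw [hrev, List.flatMap_cons]
    by_cases ht2 : 2 ≤ C.t (ℓ + 1)
    case neg =>
      have hteq : C.t (ℓ + 1) = 1 := by omega
      have hempty : negSegD C.s (ℓ + 1) (C.t (ℓ + 1) - 1) = [] := by
        rw [hteq]; rfl
      rw [hempty, List.nil_append]
      apply ih P (by omega)
      · intro l hl
        obtain ⟨i', ℓ', a, b, c, d, hor⟩ := hdesc l hl
        refine ⟨i', ℓ', a, b, c, d, ?_⟩
        rcases hor with ⟨h1, h2, _⟩ | ⟨h1, h2, h3⟩
        · exact Or.inl ⟨h1, h2, trivial⟩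
        · exact Or.inr ⟨h1, h2, by omega⟩
      · intro ℓ' i hℓ' hℓ'k hi1 hi2
        rcases Nat.lt_or_ge (ℓ + 1) ℓ' with h | h
        · exact hlow ℓ' i h hℓ'k hi1 hi2
        · have heq : ℓ' = ℓ + 1 := by omega
          subst heq
          exact absurd hi2 (by omega)
    case pos =>
      have hseg : negSegD C.s (ℓ + 1) (C.t (ℓ + 1) - 1)
          = ((C.s (C.t (ℓ + 1) - 1) (ℓ + 1), false) : Lit V)
            :: negSegD C.s (ℓ + 1) (C.t (ℓ + 1) - 2) := by
        have h : C.t (ℓ + 1) - 1 = (C.t (ℓ + 1) - 2) + 1 := by omega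
        rw [h, negSegD_succ]
      rw [hseg, List.cons_append]
      have hm0 : ({((C.s (C.t (ℓ + 1) - 1) (ℓ + 1), false) : Lit V)} : Clause V)
          ∈ restrictList (restrict C.Phi C.rho) P := by
        rcases Nat.eq_or_lt_of_le hℓk with hk' | hk'
        · -- ℓ + 1 = k : use the clause (¬y ∨ ¬x_{t k} ∨ ¬s_{t k - 1, k})
          refine unit_mem (c₀ := {((C.y, false) : Lit V), (C.x (C.t (ℓ + 1)), false),
              (C.s (C.t (ℓ + 1) - 1) (ℓ + 1), false)})
            (by rw [hk']; exact C.cE_mem (by rw [← hk']; omega) (by rw [← hk']; omega))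
            (by simp) ?_ ?_ ?_ ?_ ?_
          · apply C.rho_avoid
            intro l hl
            rcases Finset.mem_insert.1 hl with rfl | hl
            · exact Or.inl rfl
            · rcases Finset.mem_insert.1 hl with rfl | hl
              · exact Or.inl rfl
              · rw [Finset.mem_singleton] at hl; subst hl; exact Or.inl rfl
          · intro l hlP hlc
            rcases Finset.mem_insert.1 hlc with rfl | hlc
            · exact C.not_mem_ylit hdesc false hlP
            · rcases Finset.mem_insert.1 hlc with rfl | hlc
              · exact C.not_mem_xlit hdesc ht1 htn false hlP
              · rw [Finset.mem_singleton] at hlc; subst hlc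
                exact C.not_mem_neg hdesc (by omega) (by omega) h1ℓ hℓk (by omega) hlP
          · exact C.s_notin_rho true (by omega) (by omega) h1ℓ hℓk
          · exact C.not_mem_pos hdesc (by omega) (by omega) h1ℓ hℓk (by omega)
          · intro l hlc hlm
            rcases Finset.mem_insert.1 hlc with rfl | hlc
            · exact Or.inl C.y_true_mem_rho
            · rcases Finset.mem_insert.1 hlc with rfl | hlc
              · exact Or.inl (C.x_true_mem_rho (C.ht_mem (ℓ + 1) h1ℓ hℓk))
              · rw [Finset.mem_singleton] at hlc; subst hlc; exact absurd rfl hlm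
        · -- ℓ + 1 < k : use the clause (¬x_{t(ℓ+1)} ∨ ¬s_{t(ℓ+1)-1, ℓ+1} ∨ s_{t(ℓ+1), ℓ+2})
          have htlt : C.t (ℓ + 1) < C.n := C.t_lt_n h1ℓ hk'
          have hmono : C.t (ℓ + 1) < C.t (ℓ + 2) :=
            C.ht_mono (ℓ + 1) (ℓ + 2) h1ℓ (by omega) (by omega)
          have htn2 := C.t_le_n (ℓ := ℓ + 2) (by omega) (by omega)
          refine unit_mem (c₀ := {((C.x (C.t (ℓ + 1)), false) : Lit V),
              (C.s (C.t (ℓ + 1) - 1) (ℓ + 1), false), (C.s (C.t (ℓ + 1)) (ℓ + 2), true)})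
            (C.cC_mem (i := C.t (ℓ + 1)) (j := ℓ + 2) (by omega) htlt (by omega) (by omega))
            (by simp) ?_ ?_ ?_ ?_ ?_
          · apply C.rho_avoid
            intro l hl
            rcases Finset.mem_insert.1 hl with rfl | hl
            · exact Or.inl rfl
            · rcases Finset.mem_insert.1 hl with rfl | hl
              · exact Or.inl rfl
              · rw [Finset.mem_singleton] at hl; subst hl
                exact Or.inr ⟨C.t (ℓ + 1), ℓ + 2, by omega, by omega, by omega, by omega, rfl⟩
          · intro l hlP hlc
            rcases Finset.mem_insert.1 hlc with rfl | hlc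
            · exact C.not_mem_xlit hdesc ht1 htn false hlP
            · rcases Finset.mem_insert.1 hlc with rfl | hlc
              · exact C.not_mem_neg hdesc (by omega) (by omega) h1ℓ hℓk (by omega) hlP
              · rw [Finset.mem_singleton] at hlc; subst hlc
                exact C.not_mem_pos hdesc (by omega) (by omega) (by omega) (by omega)
                  (by omega) hlP
          · exact C.s_notin_rho true (by omega) (by omega) h1ℓ hℓk
          · exact C.not_mem_pos hdesc (by omega) (by omega) h1ℓ hℓk (by omega)
          · intro l hlc hlm
            rcases Finset.mem_insert.1 hlc with rfl | hlc
            · exact Or.inl (C.x_true_mem_rho (C.ht_mem (ℓ + 1) h1ℓ hℓk))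
            · rcases Finset.mem_insert.1 hlc with rfl | hlc
              · exact absurd rfl hlm
              · rw [Finset.mem_singleton] at hlc; subst hlc
                exact Or.inr (hlow (ℓ + 2) (C.t (ℓ + 1)) (by omega) (by omega)
                  (by omega) hmono)
      refine UnitChain.cons hm0 ?_
      rw [restrict_restrictList]
      set m0 : Lit V := (C.s (C.t (ℓ + 1) - 1) (ℓ + 1), false) with hm0def
      have hdesc1 : ∀ l ∈ P ++ [m0], C.Desc (fun _ _ => True)
          (fun ℓ' i => ℓ + 1 < ℓ' ∨ (ℓ' = ℓ + 1 ∧ C.t (ℓ + 1) - 2 < i)) l := by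
        intro l hl
        rcases List.mem_append.1 hl with hl | hl
        · obtain ⟨i', ℓ', a, b, c, d, hor⟩ := hdesc l hl
          refine ⟨i', ℓ', a, b, c, d, ?_⟩
          rcases hor with ⟨h1, h2, _⟩ | ⟨h1, h2, h3⟩
          · exact Or.inl ⟨h1, h2, trivial⟩
          · exact Or.inr ⟨h1, h2, Or.inl h3⟩
        · rw [List.mem_singleton] at hl; subst hl
          exact ⟨C.t (ℓ + 1) - 1, ℓ + 1, by omega, by omega, h1ℓ, hℓk,
            Or.inr ⟨rfl, by omega, Or.inr ⟨rfl, by omega⟩⟩⟩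
      apply UnitChain.append
      · apply C.negSegChain (ℓ + 1) h1ℓ hℓk (C.t (ℓ + 1) - 2) (P ++ [m0]) (by omega) hdesc1
        have h : C.t (ℓ + 1) - 2 + 1 = C.t (ℓ + 1) - 1 := by omega
        rw [h]
        exact List.mem_append_right _ (by simp [hm0def])
      · rw [← restrictList_append]
        apply ih ((P ++ [m0]) ++ negSegD C.s (ℓ + 1) (C.t (ℓ + 1) - 2)) (by omega)
        · intro l hl
          rcases List.mem_append.1 hl with hl | hl
          · obtain ⟨i', ℓ', a, b, c, d, hor⟩ := hdesc1 l hl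
            refine ⟨i', ℓ', a, b, c, d, ?_⟩
            rcases hor with ⟨h1, h2, _⟩ | ⟨h1, h2, h3⟩
            · exact Or.inl ⟨h1, h2, trivial⟩
            · exact Or.inr ⟨h1, h2, by omega⟩
          · obtain ⟨i, hi1, hi2, rfl⟩ := mem_negSegD.1 hl
            exact ⟨i, ℓ + 1, by omega, by omega, h1ℓ, hℓk,
              Or.inr ⟨rfl, by omega, by omega⟩⟩
        · intro ℓ' i hℓ' hℓ'k hi1 hi2
          rcases Nat.lt_or_ge (ℓ + 1) ℓ' with h | h
          · exact List.mem_append_left _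
              (List.mem_append_left _ (hlow ℓ' i h hℓ'k hi1 hi2))
          · have heq : ℓ' = ℓ + 1 := by omega
            subst heq
            rcases Nat.eq_or_lt_of_le (show i ≤ C.t (ℓ + 1) - 1 by omega) with h' | h'
            · apply List.mem_append_left
              apply List.mem_append_right
              simp [hm0def, h']
            · exact List.mem_append_right _
                (mem_negSegD.2 ⟨i, by omega, by omega, rfl⟩)

/-! ### The full chain -/

def LA : List (Lit V) := (List.range' 1 C.k).flatMap fun ℓ => posSeg C.s ℓ (C.t ℓ) (C.n - C.t ℓ)

def LB : List (Lit V) :=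
  ((List.range' 1 C.k).reverse).flatMap fun ℓ => negSegD C.s ℓ (C.t ℓ - 1)

def Lfull : List (Lit V) := C.LA ++ C.LB

lemma mem_LA {l : Lit V} (h : l ∈ C.LA) :
    ∃ i ℓ, 1 ≤ i ∧ i ≤ C.n - 1 ∧ 1 ≤ ℓ ∧ ℓ ≤ C.k ∧ C.t ℓ ≤ i ∧ l = (C.s i ℓ, true) := by
  obtain ⟨ℓ, hℓ, hseg⟩ := List.mem_flatMap.1 h
  rw [mem_range'_iff] at hℓ
  obtain ⟨i, hi1, hi2, rfl⟩ := mem_posSeg.1 hseg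
  have htn := C.t_le_n hℓ.1 (by omega)
  have ht1 := C.t_ge_one hℓ.1 (by omega)
  exact ⟨i, ℓ, by omega, by omega, hℓ.1, by omega, hi1, rfl⟩

lemma mem_LB {l : Lit V} (h : l ∈ C.LB) :
    ∃ i ℓ, 1 ≤ i ∧ i ≤ C.n - 1 ∧ 1 ≤ ℓ ∧ ℓ ≤ C.k ∧ i < C.t ℓ ∧ l = (C.s i ℓ, false) := by
  obtain ⟨ℓ, hℓ, hseg⟩ := List.mem_flatMap.1 h
  rw [List.mem_reverse, mem_range'_iff] at hℓ
  obtain ⟨i, hi1, hi2, rfl⟩ := mem_negSegD.1 hseg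
  have htn := C.t_le_n hℓ.1 (by omega)
  exact ⟨i, ℓ, hi1, by omega, hℓ.1, by omega, by omega, rfl⟩

lemma desc_Lfull : ∀ l ∈ C.Lfull, C.Desc (fun _ _ => True) (fun _ _ => True) l := by
  intro l hl
  rcases List.mem_append.1 hl with hl | hl
  · obtain ⟨i, ℓ, h1, h2, h3, h4, h5, rfl⟩ := C.mem_LA hl
    exact ⟨i, ℓ, h1, h2, h3, h4, Or.inl ⟨rfl, h5, trivial⟩⟩
  · obtain ⟨i, ℓ, h1, h2, h3, h4, h5, rfl⟩ := C.mem_LB hl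
    exact ⟨i, ℓ, h1, h2, h3, h4, Or.inr ⟨rfl, h5, trivial⟩⟩

lemma pos_mem_Lfull {i ℓ : ℕ} (h3 : 1 ≤ ℓ) (h4 : ℓ ≤ C.k) (h1 : C.t ℓ ≤ i)
    (h2 : i ≤ C.n - 1) : ((C.s i ℓ, true) : Lit V) ∈ C.Lfull := by
  have htn := C.t_le_n h3 h4
  have hn := C.hn
  apply List.mem_append_left
  exact List.mem_flatMap.2 ⟨ℓ, mem_range'_iff.2 ⟨h3, by omega⟩,
    mem_posSeg.2 ⟨i, h1, by omega, rfl⟩⟩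

lemma neg_mem_Lfull {i ℓ : ℕ} (h3 : 1 ≤ ℓ) (h4 : ℓ ≤ C.k) (h1 : 1 ≤ i)
    (h2 : i < C.t ℓ) : ((C.s i ℓ, false) : Lit V) ∈ C.Lfull := by
  apply List.mem_append_right
  exact List.mem_flatMap.2 ⟨ℓ, List.mem_reverse.2 (mem_range'_iff.2 ⟨h3, by omega⟩),
    mem_negSegD.2 ⟨i, h1, by omega, rfl⟩⟩

lemma fullChain : UnitChain (restrict C.Phi C.rho) C.Lfull := by
  apply UnitChain.append
  · exact C.phaseA C.k 1 [] le_rfl (by omega) (by simp) (by intro ℓ' i a b c d; omega)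
  · apply C.phaseB C.k C.LA le_rfl
    · intro l hl
      obtain ⟨i, ℓ, h1, h2, h3, h4, h5, rfl⟩ := C.mem_LA hl
      exact ⟨i, ℓ, h1, h2, h3, h4, Or.inl ⟨rfl, h5, trivial⟩⟩
    · intro ℓ' i h1 h2 _ _
      exact absurd h1 (by omega)

/-! ### The main lemma -/

lemma main (j c : ℕ) (hj1 : 1 ≤ j) (hj2 : j ≤ C.n) (hjT : j ∉ C.T)
    (hck : c ≤ C.k) (hclow : 1 ≤ c → C.t c < j) (hchigh : c < C.k → j < C.t (c + 1)) :
    UPDerives (restrict C.Phi C.rho) ((C.x j, false) : Lit V) := by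
  refine UnitChain.upDerives C.fullChain ?_
  have hdesc := C.desc_Lfull
  have hkk := C.hk
  have hnn := C.hn
  by_cases hc0 : c = 0
  · -- no true variable below j : use (¬x_j ∨ s_{j,1})
    subst hc0
    have hjlt : j < C.t 1 := by simpa using hchigh (by omega)
    have hjn : j < C.n := lt_of_lt_of_le hjlt (C.t_le_n le_rfl C.hk)
    refine unit_mem (c₀ := {((C.x j, false) : Lit V), (C.s j 1, true)})
      (C.cA1_mem hj1 hjn) (by simp) ?_ ?_ ?_ ?_ ?_
    · apply C.rho_avoid
      intro l hl
      rcases Finset.mem_insert.1 hl with rfl | hl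
      · exact Or.inl rfl
      · rw [Finset.mem_singleton] at hl; subst hl
        exact Or.inr ⟨j, 1, hj1, by omega, le_rfl, C.hk, rfl⟩
    · intro l hlP hlc
      rcases Finset.mem_insert.1 hlc with rfl | hlc
      · exact C.not_mem_xlit hdesc hj1 hj2 false hlP
      · rw [Finset.mem_singleton] at hlc; subst hlc
        exact C.not_mem_pos hdesc hj1 (by omega) le_rfl C.hk (by omega) hlP
    · exact C.x_true_notin_rho hj1 hj2 hjT
    · exact C.not_mem_xlit hdesc hj1 hj2 true
    · intro l hlc hlm
      rcases Finset.mem_insert.1 hlc with rfl | hlc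
      · exact absurd rfl hlm
      · rw [Finset.mem_singleton] at hlc; subst hlc
        exact Or.inr (C.neg_mem_Lfull le_rfl C.hk hj1 hjlt)
  · by_cases hck2 : c < C.k
    · -- 1 ≤ c < k : use (¬x_j ∨ ¬s_{j-1,c} ∨ s_{j,c+1})
      have hc1 : 1 ≤ c := by omega
      have htc : C.t c < j := hclow hc1
      have htc1 : j < C.t (c + 1) := hchigh hck2
      have hjn : j < C.n := lt_of_lt_of_le htc1 (C.t_le_n (by omega) (by omega))
      have hj2' : 2 ≤ j := by
        have := C.t_ge_one hc1 (by omega); omega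
      refine unit_mem (c₀ := {((C.x j, false) : Lit V), (C.s (j - 1) c, false),
          (C.s j (c + 1), true)})
        (C.cC_mem (j := c + 1) (by omega) hjn (by omega) (by omega)) (by simp) ?_ ?_ ?_ ?_ ?_
      · apply C.rho_avoid
        intro l hl
        rcases Finset.mem_insert.1 hl with rfl | hl
        · exact Or.inl rfl
        · rcases Finset.mem_insert.1 hl with rfl | hl
          · exact Or.inl rfl
          · rw [Finset.mem_singleton] at hl; subst hl
            exact Or.inr ⟨j, c + 1, hj1, by omega, by omega, by omega, rfl⟩
      · intro l hlP hlc
        rcases Finset.mem_insert.1 hlc with rfl | hlc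
        · exact C.not_mem_xlit hdesc hj1 hj2 false hlP
        · rcases Finset.mem_insert.1 hlc with rfl | hlc
          · exact C.not_mem_neg hdesc (by omega) (by omega) hc1 (by omega) (by omega) hlP
          · rw [Finset.mem_singleton] at hlc; subst hlc
            exact C.not_mem_pos hdesc hj1 (by omega) (by omega) (by omega) (by omega) hlP
      · exact C.x_true_notin_rho hj1 hj2 hjT
      · exact C.not_mem_xlit hdesc hj1 hj2 true
      · intro l hlc hlm
        rcases Finset.mem_insert.1 hlc with rfl | hlc
        · exact absurd rfl hlm
        · rcases Finset.mem_insert.1 hlc with rfl | hlc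
          · exact Or.inr (C.pos_mem_Lfull hc1 (by omega) (by omega) (by omega))
          · rw [Finset.mem_singleton] at hlc; subst hlc
            exact Or.inr (C.neg_mem_Lfull (by omega) (by omega) hj1 htc1)
    · -- c = k : use (¬y ∨ ¬x_j ∨ ¬s_{j-1,k})
      have hck3 : c = C.k := by omega
      have htc : C.t C.k < j := by rw [← hck3]; exact hclow (by omega)
      have ht1 : 1 ≤ C.t C.k := C.t_ge_one (by omega) le_rfl
      have htn : C.t C.k ≤ C.n := C.t_le_n (by omega) le_rfl
      have hj2' : 2 ≤ j := by omega
      refine unit_mem (c₀ := {((C.y, false) : Lit V), (C.x j, false),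
          (C.s (j - 1) C.k, false)})
        (C.cE_mem (by omega) hj2) (by simp) ?_ ?_ ?_ ?_ ?_
      · apply C.rho_avoid
        intro l hl
        rcases Finset.mem_insert.1 hl with rfl | hl
        · exact Or.inl rfl
        · rcases Finset.mem_insert.1 hl with rfl | hl
          · exact Or.inl rfl
          · rw [Finset.mem_singleton] at hl; subst hl; exact Or.inl rfl
      · intro l hlP hlc
        rcases Finset.mem_insert.1 hlc with rfl | hlc
        · exact C.not_mem_ylit hdesc false hlP
        · rcases Finset.mem_insert.1 hlc with rfl | hlc
          · exact C.not_mem_xlit hdesc hj1 hj2 false hlP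
          · rw [Finset.mem_singleton] at hlc; subst hlc
            exact C.not_mem_neg hdesc (by omega) (by omega) (by omega) le_rfl
              (by omega) hlP
      · exact C.x_true_notin_rho hj1 hj2 hjT
      · exact C.not_mem_xlit hdesc hj1 hj2 true
      · intro l hlc hlm
        rcases Finset.mem_insert.1 hlc with rfl | hlc
        · exact Or.inl C.y_true_mem_rho
        · rcases Finset.mem_insert.1 hlc with rfl | hlc
          · exact absurd rfl hlm
          · rw [Finset.mem_singleton] at hlc; subst hlc
            exact Or.inr (C.pos_mem_Lfull (by omega) le_rfl (by omega) (by omega))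

end SCtx

/-! ### The order embedding enumerates by rank -/

lemma orderEmb_lt_iff {k : ℕ} (T : Finset ℕ) (hT : T.card = k) (j : ℕ) (i : Fin k) :
    T.orderEmbOfFin hT i < j ↔ (i : ℕ) < (T.filter (fun e => e < j)).card := by
  classical
  set f := T.orderEmbOfFin hT with hf
  set D : Finset (Fin k) := Finset.univ.filter (fun i => f i < j) with hD
  have hmemD : ∀ i' : Fin k, i' ∈ D ↔ f i' < j := by intro i'; simp [hD]
  have hdc : ∀ i₁ i₂ : Fin k, i₁ ≤ i₂ → i₂ ∈ D → i₁ ∈ D := by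
    intro i₁ i₂ h12 h2
    exact (hmemD i₁).2 (lt_of_le_of_lt (f.monotone h12) ((hmemD i₂).1 h2))
  have himg : T.filter (fun e => e < j) = D.image f := by
    ext e
    simp only [Finset.mem_filter, Finset.mem_image]
    constructor
    · rintro ⟨heT, hej⟩
      have hrange : e ∈ Set.range f := by rw [hf, Finset.range_orderEmbOfFin]; exact heT
      obtain ⟨i', hi'⟩ := hrange
      exact ⟨i', (hmemD i').2 (by rw [hi']; exact hej), hi'⟩
    · rintro ⟨i', hi', rfl⟩
      exact ⟨Finset.orderEmbOfFin_mem T hT i', (hmemD i').1 hi'⟩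
  have hcard : (T.filter (fun e => e < j)).card = D.card := by
    rw [himg, Finset.card_image_of_injective _ f.injective]
  rw [hcard]
  constructor
  · intro hfi
    have hiD : i ∈ D := (hmemD i).2 hfi
    have hsub : Finset.Iic i ⊆ D := fun i₁ h1 => hdc i₁ i (Finset.mem_Iic.1 h1) hiD
    have hle := Finset.card_le_card hsub
    rw [Fin.card_Iic] at hle
    omega
  · intro hlt
    by_contra hfi
    have hiD : i ∉ D := fun h => hfi ((hmemD i).1 h)
    have hsub : D ⊆ Finset.Iio i := by
      intro i₂ h2
      rcases lt_or_ge i₂ i with h | h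
      · exact Finset.mem_Iio.2 h
      · exact absurd (hdc i i₂ h h2) hiD
    have hle := Finset.card_le_card hsub
    rw [Fin.card_Iio] at hle
    omega

theorem stmt14 {V : Type} [DecidableEq V] (n k : ℕ) (hn : 2 ≤ n) (hk : 1 ≤ k) (hkn : k < n)
    (x : ℕ → V) (s : ℕ → ℕ → V) (y : V)
    (hx : ∀ i ∈ Finset.Icc 1 n, ∀ j ∈ Finset.Icc 1 n, x i = x j → i = j)
    (hsinj : ∀ i ∈ Finset.Icc 1 (n - 1), ∀ j ∈ Finset.Icc 1 k,
      ∀ i' ∈ Finset.Icc 1 (n - 1), ∀ j' ∈ Finset.Icc 1 k,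
        s i j = s i' j' → i = i' ∧ j = j')
    (hxs : ∀ l ∈ Finset.Icc 1 n, ∀ i ∈ Finset.Icc 1 (n - 1), ∀ j ∈ Finset.Icc 1 k,
      x l ≠ s i j)
    (hxy : ∀ i ∈ Finset.Icc 1 n, x i ≠ y)
    (hsy : ∀ i ∈ Finset.Icc 1 (n - 1), ∀ j ∈ Finset.Icc 1 k, s i j ≠ y)
    (T : Finset ℕ) (hT : T ⊆ Finset.Icc 1 n) (hTcard : T.card = k) :
    ∀ j ∈ Finset.Icc 1 n, j ∉ T →
      UPDerives (restrict (seqAMKCond n k x s y)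
          (insert ((y, true) : Lit V) (T.image fun i => ((x i, true) : Lit V))))
        (x j, false) := by
  classical
  intro j hjIcc hjT
  rw [Finset.mem_Icc] at hjIcc
  set f := T.orderEmbOfFin hTcard with hf
  set t : ℕ → ℕ := fun ℓ => if h : ℓ - 1 < k then f ⟨ℓ - 1, h⟩ else 0 with ht
  have ht_mem : ∀ ℓ, 1 ≤ ℓ → ℓ ≤ k → t ℓ ∈ T := by
    intro ℓ h1 h2
    have hh : ℓ - 1 < k := by omega
    simp only [ht]
    rw [dif_pos hh]
    exact Finset.orderEmbOfFin_mem T hTcard _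
  have ht_mono : ∀ ℓ ℓ', 1 ≤ ℓ → ℓ < ℓ' → ℓ' ≤ k → t ℓ < t ℓ' := by
    intro ℓ ℓ' h1 h2 h3
    have hh : ℓ - 1 < k := by omega
    have hh' : ℓ' - 1 < k := by omega
    simp only [ht]
    rw [dif_pos hh, dif_pos hh']
    exact f.strictMono (by rw [Fin.mk_lt_mk]; omega)
  let C : SCtx V := {
    n := n, k := k, x := x, s := s, y := y, T := T, t := t,
    hn := hn, hk := hk, hkn := hkn,
    hx := fun i h1 h2 j' h3 h4 =>
      hx i (Finset.mem_Icc.2 ⟨h1, h2⟩) j' (Finset.mem_Icc.2 ⟨h3, h4⟩),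
    hsinj := fun i h1 h2 j' h3 h4 i' h5 h6 j'' h7 h8 =>
      hsinj i (Finset.mem_Icc.2 ⟨h1, h2⟩) j' (Finset.mem_Icc.2 ⟨h3, h4⟩)
        i' (Finset.mem_Icc.2 ⟨h5, h6⟩) j'' (Finset.mem_Icc.2 ⟨h7, h8⟩),
    hxs := fun l h1 h2 i h3 h4 j' h5 h6 =>
      hxs l (Finset.mem_Icc.2 ⟨h1, h2⟩) i (Finset.mem_Icc.2 ⟨h3, h4⟩)
        j' (Finset.mem_Icc.2 ⟨h5, h6⟩),
    hxy := fun i h1 h2 => hxy i (Finset.mem_Icc.2 ⟨h1, h2⟩),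
    hsy := fun i h1 h2 j' h3 h4 =>
      hsy i (Finset.mem_Icc.2 ⟨h1, h2⟩) j' (Finset.mem_Icc.2 ⟨h3, h4⟩),
    hT := hT, ht_mem := ht_mem, ht_mono := ht_mono }
  set c := (T.filter (fun e => e < j)).card with hc
  have hck : c ≤ k := by rw [← hTcard]; exact Finset.card_filter_le _ _
  have hiff : ∀ (i : Fin k), f i < j ↔ (i : ℕ) < c := fun i => orderEmb_lt_iff T hTcard j i
  have hclow : 1 ≤ c → t c < j := by
    intro h1
    have hh : c - 1 < k := by omega
    have heq : t c = f ⟨c - 1, hh⟩ := by simp only [ht]; rw [dif_pos hh]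
    rw [heq]
    exact (hiff _).2 (show c - 1 < c by omega)
  have hchigh : c < k → j < t (c + 1) := by
    intro h
    have hh : c + 1 - 1 < k := by omega
    have hic : ((⟨c + 1 - 1, hh⟩ : Fin k) : ℕ) = c := rfl
    have heq : t (c + 1) = f ⟨c + 1 - 1, hh⟩ := by simp only [ht]; rw [dif_pos hh]
    rw [heq]
    have hnlt : ¬ (f ⟨c + 1 - 1, hh⟩ < j) := by
      intro hco
      have := (hiff _).1 hco
      rw [hic] at this
      omega
    have hne : f ⟨c + 1 - 1, hh⟩ ≠ j := fun heq' =>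
      hjT (heq' ▸ Finset.orderEmbOfFin_mem T hTcard _)
    omega
  exact C.main j c hjIcc.1 hjIcc.2 hjT hck hclow hchigh
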